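/- Let n ≥ 3 and consider the financial network with banks v_1,…,v_n, all external assets 0, liabilities l_{v_{i+1}, v_i} = 1 for i = 1,…,n−1 (all others 0), no default costs (α = β = 1), and budget M = 1, where for every strategy profile the regulator injects the entire budget into the defaulting bank with the highest threat index of the modified network, breaking ties in favor of the lowest index (and into v_1 if no bank is in default). Then: (i) under the profile in which no edges are removed, the budget is injected into v_n and the resulting systemic liquidity is n−1; (ii) the profile in which each bank v_i for 2 ≤ i ≤ n−1 removes its incoming edge (v_{i+1}, v_i) and v_1 keeps its incoming edge (v_2, v_1) is a pure Nash equilibrium whose systemic liquidity is 1. Consequently, the Effect of Anarchy of edge-removal games with cash injections is at least n−1. -/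

import Mathlib

open Finset

/-- `p` is a proportional clearing payment matrix for the network with external assets `e`,
liabilities `l` and default costs `α, β`. -/
def IsClearing {ι : Type*} [Fintype ι] (α β : ℝ) (e : ι → ℝ) (l : ι → ι → ℝ)
    (p : ι → ι → ℝ) : Prop :=
  (∀ i j, 0 ≤ p i j) ∧ (∀ i j, p i j ≤ l i j) ∧
  (∀ i, (∑ j, l i j) ≤ e i + (∑ j, p j i) → ∀ j, p i j = l i j) ∧
  (∀ i, e i + (∑ j, p j i) < (∑ j, l i j) →
    ∀ j, p i j = (α * e i + β * (∑ k, p k i)) * l i j / (∑ k, l i k))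

/-- `p` is the maximal clearing payment matrix. -/
def IsMaxClearing {ι : Type*} [Fintype ι] (α β : ℝ) (e : ι → ℝ) (l p : ι → ι → ℝ) : Prop :=
  IsClearing α β e l p ∧ ∀ q, IsClearing α β e l q → ∀ i j, q i j ≤ p i j

/-- Systemic liquidity: the sum of all payments. -/
def liquidity {ι : Type*} [Fintype ι] (p : ι → ι → ℝ) : ℝ := ∑ i, ∑ j, p i j

/-- Total assets of bank `i` under payments `p`. -/
def assets {ι : Type*} [Fintype ι] (e : ι → ℝ) (p : ι → ι → ℝ) (i : ι) : ℝ :=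
  e i + ∑ j, p j i

/-- The liabilities obtained from `l` when each bank `j` removes the incoming edges from
the banks in `s j`. -/
def removeEdges {ι : Type*} [DecidableEq ι] (l : ι → ι → ℝ) (s : ι → Finset ι) :
    ι → ι → ℝ :=
  fun i j => if i ∈ s j then 0 else l i j

/-- The set of banks in default under payments `p`. -/
def Defaulting {ι : Type*} [Fintype ι] (e : ι → ℝ) (l p : ι → ι → ℝ) : Set ι :=
  {i | e i + (∑ j, p j i) < ∑ j, l i j}

/-- `μ` is the threat-index vector for the network `(e, l)` with payments `p`. -/
def IsThreatIndex {ι : Type*} [Fintype ι] (e : ι → ℝ) (l p : ι → ι → ℝ) (μ : ι → ℝ) :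
    Prop :=
  (∀ i, i ∉ Defaulting e l p → μ i = 0) ∧
  (∀ i, i ∈ Defaulting e l p →
    μ i = 1 + ∑ j, Set.indicator (Defaulting e l p)
      (fun j' => l i j' / (∑ k, l i k) * μ j') j)

/-- The regulator's injection rule: the budget goes to the defaulting bank with the
highest threat index, ties broken in favor of the lowest index; to bank `0` (v₁) if no
bank is in default. -/
def TargetSpec {n : ℕ} (e : Fin n → ℝ) (l p : Fin n → Fin n → ℝ) (μ : Fin n → ℝ)
    (b : Fin n) : Prop :=
  (Defaulting e l p = ∅ → (b : ℕ) = 0) ∧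
  (Defaulting e l p ≠ ∅ →
    b ∈ Defaulting e l p ∧ (∀ i ∈ Defaulting e l p, μ i ≤ μ b) ∧
    (∀ i ∈ Defaulting e l p, μ i = μ b → b ≤ i))

namespace EoA

lemma ite_one {c : Prop} [Decidable c] (h : c) : (if c then (1 : ℝ) else 0) = 1 := if_pos h
lemma ite_zero {c : Prop} [Decidable c] (h : ¬c) : (if c then (1 : ℝ) else 0) = 0 := if_neg h

lemma aux_sum_single {n : ℕ} (c : ℕ) (hc : c < n) (f : Fin n → ℝ) (v : ℝ)
    (h0 : ∀ j : Fin n, (j : ℕ) ≠ c → f j = 0)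
    (h1 : ∀ j : Fin n, (j : ℕ) = c → f j = v) :
    ∑ j : Fin n, f j = v := by
  have := Finset.sum_eq_single (⟨c, hc⟩ : Fin n)
    (f := f) (fun j _ hj => h0 j (by simpa [Fin.ext_iff] using hj))
    (fun h => absurd (Finset.mem_univ _) h)
  rw [this]; exact h1 _ rfl

lemma aux_sum_zero {n : ℕ} (f : Fin n → ℝ) (hf : ∀ j, f j = 0) : ∑ j, f j = 0 := by
  simp [hf]

lemma clearing_unique {n : ℕ} (e : Fin n → ℝ) (l : Fin n → Fin n → ℝ)
    (hl : ∀ i j : Fin n, l i j ≠ 0 → (i : ℕ) = (j : ℕ) + 1)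
    {p q : Fin n → Fin n → ℝ}
    (hp : IsClearing 1 1 e l p) (hq : IsClearing 1 1 e l q) : p = q := by
  obtain ⟨hp0, hpl, hp1, hp2⟩ := hp
  obtain ⟨hq0, hql, hq1, hq2⟩ := hq
  have key : ∀ k : ℕ, ∀ i : Fin n, n - (i : ℕ) ≤ k → ∀ j, p i j = q i j := by
    intro k
    induction k with
    | zero => intro i hi; exact absurd hi (by have := i.isLt; omega)
    | succ k ih =>
      intro i hi j
      have hin : ∀ j' : Fin n, p j' i = q j' i := by
        intro j'
        by_cases hne : l j' i = 0
        · have h1 : p j' i ≤ 0 := hne ▸ hpl j' i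
          have h2 : q j' i ≤ 0 := hne ▸ hql j' i
          linarith [hp0 j' i, hq0 j' i]
        · have hj' := hl j' i hne
          have := i.isLt
          exact ih j' (by omega) i
      have hsum : (∑ j', p j' i) = ∑ j', q j' i :=
        Finset.sum_congr rfl (fun j' _ => hin j')
      by_cases hc : (∑ j', l i j') ≤ e i + ∑ j', p j' i
      · rw [hp1 i hc j, hq1 i (by rw [← hsum]; exact hc) j]
      · push_neg at hc
        rw [hp2 i hc j, hq2 i (by rw [← hsum]; exact hc) j, hsum]
  funext i j
  exact key n i (by omega) j

lemma isClearing_zero {n : ℕ} (l : Fin n → Fin n → ℝ) (hl : ∀ i j, 0 ≤ l i j) :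
    IsClearing 1 1 (fun _ => 0) l (fun _ _ => 0) := by
  refine ⟨fun _ _ => le_refl 0, fun i j => hl i j, ?_, ?_⟩
  · intro i hi j
    have h0 : (∑ j', l i j') ≤ 0 := by simpa using hi
    have h1 : (∑ j', l i j') = 0 :=
      le_antisymm h0 (Finset.sum_nonneg (fun j' _ => hl i j'))
    have := (Finset.sum_eq_zero_iff_of_nonneg (fun j' _ => hl i j')).1 h1 j
      (Finset.mem_univ _)
    simp [this]
  · intro i _ j
    simp

lemma isClearing_full {n : ℕ} (e : Fin n → ℝ) (l : Fin n → Fin n → ℝ)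
    (hl : ∀ i j, 0 ≤ l i j) (h : ∀ i, (∑ j, l i j) ≤ e i + ∑ j, l j i) :
    IsClearing 1 1 e l l :=
  ⟨hl, fun _ _ => le_rfl, fun _ _ _ => rfl, fun i hi => absurd (h i) (not_le.2 hi)⟩

lemma pay_eq {n : ℕ} {e : Fin n → ℝ} {N P c : Fin n → Fin n → ℝ}
    (hN : ∀ i j : Fin n, N i j ≠ 0 → (i : ℕ) = (j : ℕ) + 1)
    (hP : IsMaxClearing 1 1 e N P) (hc : IsClearing 1 1 e N c) : P = c :=
  clearing_unique e N hN hP.1 hc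

def chainL (n : ℕ) : Fin n → Fin n → ℝ := fun i j => if (i : ℕ) = (j : ℕ) + 1 then 1 else 0
def E10 (n : ℕ) : Fin n → Fin n → ℝ := fun i j => if (i : ℕ) = 1 ∧ (j : ℕ) = 0 then 1 else 0
def Etwo (n m : ℕ) : Fin n → Fin n → ℝ :=
  fun i j => if ((i : ℕ) = 1 ∧ (j : ℕ) = 0) ∨ ((i : ℕ) = m + 1 ∧ (j : ℕ) = m) then 1 else 0

lemma chain_nonneg {n : ℕ} : ∀ i j : Fin n, 0 ≤ chainL n i j := by
  intro i j; unfold chainL; split <;> norm_num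
lemma e10_nonneg {n : ℕ} : ∀ i j : Fin n, 0 ≤ E10 n i j := by
  intro i j; unfold E10; split <;> norm_num
lemma etwo_nonneg {n m : ℕ} : ∀ i j : Fin n, 0 ≤ Etwo n m i j := by
  intro i j; unfold Etwo; split <;> norm_num

lemma chain_tri {n : ℕ} : ∀ i j : Fin n, chainL n i j ≠ 0 → (i : ℕ) = (j : ℕ) + 1 := by
  intro i j h
  by_contra hc; simp [chainL, hc] at h
lemma e10_tri {n : ℕ} : ∀ i j : Fin n, E10 n i j ≠ 0 → (i : ℕ) = (j : ℕ) + 1 := by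
  intro i j h
  rcases Decidable.em ((i : ℕ) = 1 ∧ (j : ℕ) = 0) with hc | hc
  · omega
  · simp [E10, hc] at h
lemma etwo_tri {n m : ℕ} : ∀ i j : Fin n, Etwo n m i j ≠ 0 → (i : ℕ) = (j : ℕ) + 1 := by
  intro i j h
  rcases Decidable.em (((i : ℕ) = 1 ∧ (j : ℕ) = 0) ∨ ((i : ℕ) = m + 1 ∧ (j : ℕ) = m)) with hc | hc
  · omega
  · simp [Etwo, hc] at h
lemma zero_tri {n : ℕ} : ∀ i j : Fin n, (fun _ _ => (0:ℝ)) i j ≠ 0 → (i : ℕ) = (j : ℕ) + 1 := by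
  intro i j h; exact absurd rfl h

lemma chain_rowsum {n : ℕ} (i : Fin n) :
    (∑ j, chainL n i j) = if 1 ≤ (i : ℕ) then 1 else 0 := by
  by_cases h : 1 ≤ (i : ℕ)
  · rw [if_pos h]
    exact aux_sum_single ((i : ℕ) - 1) (by have := i.isLt; omega) _ _
      (fun j hj => ite_zero (by omega)) (fun j hj => ite_one (by omega))
  · rw [if_neg h]
    exact aux_sum_zero _ (fun j => ite_zero (by omega))

lemma chain_colsum {n : ℕ} (i : Fin n) :
    (∑ j, chainL n j i) = if (i : ℕ) + 1 < n then 1 else 0 := by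
  by_cases h : (i : ℕ) + 1 < n
  · rw [if_pos h]
    exact aux_sum_single ((i : ℕ) + 1) h _ _
      (fun j hj => ite_zero (by omega)) (fun j hj => ite_one (by omega))
  · rw [if_neg h]
    exact aux_sum_zero _ (fun j => ite_zero (by have := j.isLt; omega))

lemma e10_rowsum {n : ℕ} (hn : 3 ≤ n) (i : Fin n) :
    (∑ j, E10 n i j) = if (i : ℕ) = 1 then 1 else 0 := by
  by_cases h : (i : ℕ) = 1
  · rw [if_pos h]
    exact aux_sum_single 0 (by omega) _ _
      (fun j hj => ite_zero (by omega)) (fun j hj => ite_one (by omega))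
  · rw [if_neg h]
    exact aux_sum_zero _ (fun j => ite_zero (by omega))

lemma e10_colsum {n : ℕ} (hn : 3 ≤ n) (i : Fin n) :
    (∑ j, E10 n j i) = if (i : ℕ) = 0 then 1 else 0 := by
  by_cases h : (i : ℕ) = 0
  · rw [if_pos h]
    exact aux_sum_single 1 (by omega) _ _
      (fun j hj => ite_zero (by omega)) (fun j hj => ite_one (by omega))
  · rw [if_neg h]
    exact aux_sum_zero _ (fun j => ite_zero (by omega))

lemma etwo_rowsum {n m : ℕ} (hm : 1 ≤ m) (hm2 : m + 2 ≤ n) (i : Fin n) :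
    (∑ j, Etwo n m i j) = if (i : ℕ) = 1 ∨ (i : ℕ) = m + 1 then 1 else 0 := by
  by_cases h1 : (i : ℕ) = 1
  · rw [if_pos (Or.inl h1)]
    exact aux_sum_single 0 (by omega) _ _
      (fun j hj => ite_zero (by omega)) (fun j hj => ite_one (by omega))
  · by_cases h2 : (i : ℕ) = m + 1
    · rw [if_pos (Or.inr h2)]
      exact aux_sum_single m (by omega) _ _
        (fun j hj => ite_zero (by omega)) (fun j hj => ite_one (by omega))
    · rw [if_neg (by omega)]
      exact aux_sum_zero _ (fun j => ite_zero (by omega))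

lemma etwo_colsum {n m : ℕ} (hm : 1 ≤ m) (hm2 : m + 2 ≤ n) (i : Fin n) :
    (∑ j, Etwo n m j i) = if (i : ℕ) = 0 ∨ (i : ℕ) = m then 1 else 0 := by
  by_cases h1 : (i : ℕ) = 0
  · rw [if_pos (Or.inl h1)]
    exact aux_sum_single 1 (by omega) _ _
      (fun j hj => ite_zero (by omega)) (fun j hj => ite_one (by omega))
  · by_cases h2 : (i : ℕ) = m
    · rw [if_pos (Or.inr h2)]
      exact aux_sum_single (m + 1) (by omega) _ _
        (fun j hj => ite_zero (by omega)) (fun j hj => ite_one (by omega))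
    · rw [if_neg (by omega)]
      exact aux_sum_zero _ (fun j => ite_zero (by omega))

lemma sum_if_ge_one {n : ℕ} (hn : 1 ≤ n) :
    (∑ i : Fin n, if 1 ≤ (i : ℕ) then (1 : ℝ) else 0) = (n : ℝ) - 1 := by
  have h : ∀ i : Fin n, (if 1 ≤ (i : ℕ) then (1 : ℝ) else 0)
      = 1 - (if (i : ℕ) = 0 then 1 else 0) := by
    intro i; by_cases h : (i : ℕ) = 0
    · rw [ite_zero (by omega), if_pos h]; norm_num
    · rw [ite_one (by omega), if_neg h]; norm_num
  rw [Finset.sum_congr rfl (fun i _ => h i), Finset.sum_sub_distrib,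
    aux_sum_single 0 (by omega) _ 1 (fun j hj => if_neg hj) (fun j hj => if_pos hj)]
  simp

lemma mem_def0 {n : ℕ} (N : Fin n → Fin n → ℝ) (i : Fin n) :
    i ∈ Defaulting (fun _ => (0 : ℝ)) N (fun _ _ => (0 : ℝ)) ↔ 0 < ∑ j, N i j := by
  unfold Defaulting; simp

/-- Threat index values for the full chain. -/
lemma chain_mu {n : ℕ} (hn : 3 ≤ n) (μ : Fin n → ℝ)
    (hμ : IsThreatIndex (fun _ => 0) (chainL n) (fun _ _ => 0) μ) :
    ∀ i : Fin n, μ i = (i : ℕ) := by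
  obtain ⟨h0, h1⟩ := hμ
  have key : ∀ m : ℕ, ∀ i : Fin n, (i : ℕ) = m → μ i = m := by
    intro m
    induction m using Nat.strong_induction_on with
    | _ m ih =>
      intro i him
      by_cases hm0 : m = 0
      · have hnm : i ∉ Defaulting (fun _ => (0:ℝ)) (chainL n) (fun _ _ => (0:ℝ)) := by
          rw [mem_def0, chain_rowsum, ite_zero (show ¬(1 ≤ (i : ℕ)) by omega)]
          norm_num
        rw [h0 i hnm, hm0]; norm_num
      · have hmem : i ∈ Defaulting (fun _ => (0:ℝ)) (chainL n) (fun _ _ => (0:ℝ)) := by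
          rw [mem_def0, chain_rowsum, ite_one (show 1 ≤ (i : ℕ) by omega)]
          norm_num
        have heq := h1 i hmem
        have hrs : (∑ k, chainL n i k) = 1 := by
          rw [chain_rowsum]; exact ite_one (by omega)
        rw [hrs] at heq
        have hsum : (∑ j, Set.indicator (Defaulting (fun _ => (0:ℝ)) (chainL n) (fun _ _ => (0:ℝ)))
            (fun j' => chainL n i j' / 1 * μ j') j) = if 2 ≤ m then ((m : ℝ) - 1) else 0 := by
          refine aux_sum_single (m - 1) (by have := i.isLt; omega) _ _ ?_ ?_
          · intro j hj
            by_cases hD : j ∈ Defaulting (fun _ => (0:ℝ)) (chainL n) (fun _ _ => (0:ℝ))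
            · rw [Set.indicator_of_mem hD]
              have hc : chainL n i j = 0 := ite_zero (by omega)
              rw [hc]; ring
            · rw [Set.indicator_of_notMem hD]
          · intro j hj
            by_cases h2 : 2 ≤ m
            · rw [if_pos h2]
              have hD : j ∈ Defaulting (fun _ => (0:ℝ)) (chainL n) (fun _ _ => (0:ℝ)) := by
                rw [mem_def0, chain_rowsum, ite_one (show 1 ≤ (j : ℕ) by omega)]
                norm_num
              rw [Set.indicator_of_mem hD]
              have hc : chainL n i j = 1 := ite_one (by omega)
              have hμj : μ j = ((m - 1 : ℕ) : ℝ) := ih (m - 1) (by omega) j hj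
              rw [hc, hμj, Nat.cast_sub (by omega)]
              push_cast; ring
            · rw [if_neg h2]
              have hD : j ∉ Defaulting (fun _ => (0:ℝ)) (chainL n) (fun _ _ => (0:ℝ)) := by
                rw [mem_def0, chain_rowsum, ite_zero (show ¬(1 ≤ (j : ℕ)) by omega)]
                norm_num
              rw [Set.indicator_of_notMem hD]
        rw [hsum] at heq
        rw [heq]
        by_cases h2 : 2 ≤ m
        · rw [if_pos h2]; ring
        · rw [if_neg h2]
          have : m = 1 := by omega
          subst this; norm_num
  intro i
  exact key (i : ℕ) i rfl

/-- The target for the full chain is bank n-1. -/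
lemma chain_b {n : ℕ} (hn : 3 ≤ n) (μ : Fin n → ℝ) (b : Fin n)
    (hμ : IsThreatIndex (fun _ => 0) (chainL n) (fun _ _ => 0) μ)
    (hb : TargetSpec (fun _ => 0) (chainL n) (fun _ _ => 0) μ b) : (b : ℕ) = n - 1 := by
  have hmu := chain_mu hn μ hμ
  have hlast : (⟨n - 1, by omega⟩ : Fin n) ∈
      Defaulting (fun _ => (0:ℝ)) (chainL n) (fun _ _ => (0:ℝ)) := by
    rw [mem_def0, chain_rowsum, ite_one (show 1 ≤ n - 1 by omega)]
    norm_num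
  have hne : Defaulting (fun _ => (0:ℝ)) (chainL n) (fun _ _ => (0:ℝ)) ≠ ∅ := by
    intro hE; rw [hE] at hlast; exact hlast
  obtain ⟨hbD, hmax, -⟩ := hb.2 hne
  have h1 := hmax _ hlast
  rw [hmu, hmu] at h1
  have hval : ((⟨n - 1, by omega⟩ : Fin n) : ℕ) = n - 1 := rfl
  rw [hval] at h1
  have h2 : n - 1 ≤ (b : ℕ) := by exact_mod_cast h1
  have := b.isLt
  omega

/-- The target for the E10 network is bank 1. -/
lemma e10_b {n : ℕ} (hn : 3 ≤ n) (μ : Fin n → ℝ) (b : Fin n)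
    (hb : TargetSpec (fun _ => 0) (E10 n) (fun _ _ => 0) μ b) : (b : ℕ) = 1 := by
  have h1mem : (⟨1, by omega⟩ : Fin n) ∈
      Defaulting (fun _ => (0:ℝ)) (E10 n) (fun _ _ => (0:ℝ)) := by
    rw [mem_def0, e10_rowsum hn, ite_one (show ((⟨1, by omega⟩ : Fin n) : ℕ) = 1 from rfl)]
    norm_num
  have hne : Defaulting (fun _ => (0:ℝ)) (E10 n) (fun _ _ => (0:ℝ)) ≠ ∅ := by
    intro hE; rw [hE] at h1mem; exact h1mem
  obtain ⟨hbD, -, -⟩ := hb.2 hne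
  rw [mem_def0, e10_rowsum hn] at hbD
  by_contra hc
  rw [ite_zero hc] at hbD
  norm_num at hbD

/-- Threat index of bank 1 in the Etwo network. -/
lemma etwo_mu {n m : ℕ} (hn : 3 ≤ n) (hm : 1 ≤ m) (hm2 : m + 2 ≤ n) (μ : Fin n → ℝ)
    (hμ : IsThreatIndex (fun _ => 0) (Etwo n m) (fun _ _ => 0) μ) :
    (∀ i : Fin n, (i : ℕ) = 1 → μ i = 1) ∧
    (∀ i : Fin n, (i : ℕ) = m + 1 → μ i = if m = 1 then 2 else 1) := by
  obtain ⟨h0, h1⟩ := hμ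
  have hmu1 : ∀ i : Fin n, (i : ℕ) = 1 → μ i = 1 := by
    intro i hi
    have hmem : i ∈ Defaulting (fun _ => (0:ℝ)) (Etwo n m) (fun _ _ => (0:ℝ)) := by
      rw [mem_def0, etwo_rowsum hm hm2, ite_one (Or.inl hi)]
      norm_num
    have heq := h1 i hmem
    have hsum : (∑ j, Set.indicator (Defaulting (fun _ => (0:ℝ)) (Etwo n m) (fun _ _ => (0:ℝ)))
        (fun j' => Etwo n m i j' / (∑ k, Etwo n m i k) * μ j') j) = 0 := by
      refine aux_sum_zero _ (fun j => ?_)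
      by_cases hD : j ∈ Defaulting (fun _ => (0:ℝ)) (Etwo n m) (fun _ _ => (0:ℝ))
      · rw [Set.indicator_of_mem hD]
        rw [mem_def0, etwo_rowsum hm hm2] at hD
        have hj : (j : ℕ) = 1 ∨ (j : ℕ) = m + 1 := by
          by_contra hc
          rw [ite_zero hc] at hD; norm_num at hD
        have hc : Etwo n m i j = 0 := ite_zero (by omega)
        rw [hc]; ring
      · rw [Set.indicator_of_notMem hD]
    rw [hsum] at heq
    rw [heq]; norm_num
  refine ⟨hmu1, ?_⟩
  intro i hi
  have hmem : i ∈ Defaulting (fun _ => (0:ℝ)) (Etwo n m) (fun _ _ => (0:ℝ)) := by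
    rw [mem_def0, etwo_rowsum hm hm2, ite_one (Or.inr hi)]
    norm_num
  have heq := h1 i hmem
  have hrs : (∑ k, Etwo n m i k) = 1 := by
    rw [etwo_rowsum hm hm2]; exact ite_one (Or.inr hi)
  rw [hrs] at heq
  have hsum : (∑ j, Set.indicator (Defaulting (fun _ => (0:ℝ)) (Etwo n m) (fun _ _ => (0:ℝ)))
      (fun j' => Etwo n m i j' / 1 * μ j') j) = if m = 1 then 1 else 0 := by
    refine aux_sum_single m (by omega) _ _ ?_ ?_
    · intro j hj
      by_cases hD : j ∈ Defaulting (fun _ => (0:ℝ)) (Etwo n m) (fun _ _ => (0:ℝ))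
      · rw [Set.indicator_of_mem hD]
        have hc : Etwo n m i j = 0 := ite_zero (by omega)
        rw [hc]; ring
      · rw [Set.indicator_of_notMem hD]
    · intro j hj
      by_cases h2 : m = 1
      · rw [if_pos h2]
        have hD : j ∈ Defaulting (fun _ => (0:ℝ)) (Etwo n m) (fun _ _ => (0:ℝ)) := by
          rw [mem_def0, etwo_rowsum hm hm2, ite_one (Or.inl (by omega))]
          norm_num
        rw [Set.indicator_of_mem hD]
        have hc : Etwo n m i j = 1 := ite_one (by omega)
        rw [hc, hmu1 j (by omega)]; ring
      · rw [if_neg h2]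
        have hD : j ∉ Defaulting (fun _ => (0:ℝ)) (Etwo n m) (fun _ _ => (0:ℝ)) := by
          rw [mem_def0, etwo_rowsum hm hm2, ite_zero (by omega)]
          norm_num
        rw [Set.indicator_of_notMem hD]
  rw [hsum] at heq
  rw [heq]
  by_cases h2 : m = 1
  · rw [if_pos h2, if_pos h2]; norm_num
  · rw [if_neg h2, if_neg h2]; norm_num

/-- The target for the Etwo network. -/
lemma etwo_b {n m : ℕ} (hn : 3 ≤ n) (hm : 1 ≤ m) (hm2 : m + 2 ≤ n) (μ : Fin n → ℝ) (b : Fin n)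
    (hμ : IsThreatIndex (fun _ => 0) (Etwo n m) (fun _ _ => 0) μ)
    (hb : TargetSpec (fun _ => 0) (Etwo n m) (fun _ _ => 0) μ b) :
    (b : ℕ) = if m = 1 then 2 else 1 := by
  obtain ⟨hmu1, hmu2⟩ := etwo_mu hn hm hm2 μ hμ
  have h1mem : (⟨1, by omega⟩ : Fin n) ∈
      Defaulting (fun _ => (0:ℝ)) (Etwo n m) (fun _ _ => (0:ℝ)) := by
    rw [mem_def0, etwo_rowsum hm hm2, ite_one (Or.inl rfl)]
    norm_num
  have h2mem : (⟨m + 1, by omega⟩ : Fin n) ∈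
      Defaulting (fun _ => (0:ℝ)) (Etwo n m) (fun _ _ => (0:ℝ)) := by
    rw [mem_def0, etwo_rowsum hm hm2, ite_one (Or.inr rfl)]
    norm_num
  have hne : Defaulting (fun _ => (0:ℝ)) (Etwo n m) (fun _ _ => (0:ℝ)) ≠ ∅ := by
    intro hE; rw [hE] at h1mem; exact h1mem
  obtain ⟨hbD, hmax, htie⟩ := hb.2 hne
  have hbv : (b : ℕ) = 1 ∨ (b : ℕ) = m + 1 := by
    rw [mem_def0, etwo_rowsum hm hm2] at hbD
    by_contra hc
    rw [ite_zero (by omega)] at hbD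
    norm_num at hbD
  by_cases h2 : m = 1
  · rw [if_pos h2]
    have hle := hmax _ h2mem
    rw [hmu2 _ rfl, if_pos h2] at hle
    rcases hbv with hb1 | hb1
    · rw [hmu1 b hb1] at hle; norm_num at hle
    · omega
  · rw [if_neg h2]
    rcases hbv with hb1 | hb1
    · exact hb1
    · exfalso
      have hμb : μ b = 1 := by rw [hmu2 b hb1, if_neg h2]
      have hle := htie _ h1mem (by rw [hmu1 _ rfl, hμb])
      have : ((⟨1, by omega⟩ : Fin n) : ℕ) = 1 := rfl
      rw [Fin.le_def] at hle
      omega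

end EoA
-- continuation: candidate clearing matrices, liquidity, network equalities
namespace EoA

lemma liq_chain {n : ℕ} (hn : 3 ≤ n) : liquidity (chainL n) = (n : ℝ) - 1 := by
  unfold liquidity
  rw [Finset.sum_congr rfl (fun i _ => chain_rowsum i)]
  exact sum_if_ge_one (by omega)

lemma liq_e10 {n : ℕ} (hn : 3 ≤ n) : liquidity (E10 n) = 1 := by
  unfold liquidity
  rw [Finset.sum_congr rfl (fun i _ => e10_rowsum hn i)]
  exact aux_sum_single 1 (by omega) _ _ (fun j hj => ite_zero hj) (fun j hj => ite_one hj)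

lemma clear_chain_full {n : ℕ} (hn : 3 ≤ n) (e' : Fin n → ℝ)
    (he0 : ∀ i, 0 ≤ e' i) (he1 : ∀ i : Fin n, (i : ℕ) = n - 1 → e' i = 1) :
    IsClearing 1 1 e' (chainL n) (chainL n) := by
  refine isClearing_full e' _ chain_nonneg (fun i => ?_)
  rw [chain_rowsum, chain_colsum]
  by_cases h1 : (i : ℕ) + 1 < n
  · rw [if_pos h1]
    have := he0 i
    by_cases h2 : 1 ≤ (i : ℕ)
    · rw [if_pos h2]; linarith
    · rw [if_neg h2]; linarith
  · rw [if_neg h1, he1 i (by have := i.isLt; omega)]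
    by_cases h2 : 1 ≤ (i : ℕ)
    · rw [if_pos h2]; norm_num
    · rw [if_neg h2]; norm_num

lemma clear_e10_full {n : ℕ} (hn : 3 ≤ n) (e' : Fin n → ℝ)
    (he0 : ∀ i, 0 ≤ e' i) (he1 : ∀ i : Fin n, (i : ℕ) = 1 → e' i = 1) :
    IsClearing 1 1 e' (E10 n) (E10 n) := by
  refine isClearing_full e' _ e10_nonneg (fun i => ?_)
  rw [e10_rowsum hn, e10_colsum hn]
  by_cases h1 : (i : ℕ) = 1
  · rw [if_pos h1, he1 i h1, if_neg (show ¬((i : ℕ) = 0) by omega)]; norm_num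
  · rw [if_neg h1]
    have := he0 i
    by_cases h2 : (i : ℕ) = 0
    · rw [if_pos h2]; linarith
    · rw [if_neg h2]; linarith

lemma clear_etwo1_full {n : ℕ} (hn : 3 ≤ n) (e' : Fin n → ℝ)
    (he0 : ∀ i, 0 ≤ e' i) (he1 : ∀ i : Fin n, (i : ℕ) = 2 → e' i = 1) :
    IsClearing 1 1 e' (Etwo n 1) (Etwo n 1) := by
  refine isClearing_full e' _ etwo_nonneg (fun i => ?_)
  rw [etwo_rowsum (le_refl 1) (by omega), etwo_colsum (le_refl 1) (by omega)]
  have h0 := he0 i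
  by_cases h1 : (i : ℕ) = 1
  · rw [if_pos (Or.inl h1), if_pos (Or.inr h1)]; linarith
  · by_cases h2 : (i : ℕ) = 2
    · rw [if_pos (Or.inr h2), he1 i h2, if_neg (show ¬((i : ℕ) = 0 ∨ (i : ℕ) = 1) by omega)]
      norm_num
    · rw [if_neg (show ¬((i : ℕ) = 1 ∨ (i : ℕ) = 1 + 1) by omega)]
      by_cases h3 : (i : ℕ) = 0 ∨ (i : ℕ) = 1
      · rw [if_pos h3]; linarith
      · rw [if_neg h3]; linarith

lemma clear_etwo_e10 {n m : ℕ} (hn : 3 ≤ n) (hm : 2 ≤ m) (hm2 : m + 2 ≤ n)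
    (e' : Fin n → ℝ)
    (he1 : ∀ i : Fin n, (i : ℕ) = 1 → e' i = 1)
    (hez : ∀ i : Fin n, (i : ℕ) ≠ 1 → e' i = 0) :
    IsClearing 1 1 e' (Etwo n m) (E10 n) := by
  have hm1 : 1 ≤ m := by omega
  refine ⟨e10_nonneg, ?_, ?_, ?_⟩
  · intro i j
    unfold E10 Etwo
    by_cases hc : (i : ℕ) = 1 ∧ (j : ℕ) = 0
    · rw [if_pos hc, if_pos (Or.inl hc)]
    · rw [if_neg hc]
      split <;> norm_num
  · intro i hi j
    rw [etwo_rowsum hm1 hm2, e10_colsum hn] at hi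
    by_cases hi1 : (i : ℕ) = 1
    · unfold E10 Etwo
      by_cases hj : (j : ℕ) = 0
      · rw [if_pos ⟨hi1, hj⟩, if_pos (Or.inl ⟨hi1, hj⟩)]
      · have hc1 : ¬((i : ℕ) = 1 ∧ (j : ℕ) = 0) := by omega
        have hc2 : ¬(((i : ℕ) = 1 ∧ (j : ℕ) = 0) ∨ ((i : ℕ) = m + 1 ∧ (j : ℕ) = m)) := by omega
        rw [if_neg hc1, if_neg hc2]
    · by_cases him : (i : ℕ) = m + 1
      · exfalso
        rw [ite_one (Or.inr him), if_neg (show ¬((i : ℕ) = 0) by omega),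
          hez i (by omega)] at hi
        norm_num at hi
      · have hc1 : ¬((i : ℕ) = 1 ∧ (j : ℕ) = 0) := by omega
        have hc2 : ¬(((i : ℕ) = 1 ∧ (j : ℕ) = 0) ∨ ((i : ℕ) = m + 1 ∧ (j : ℕ) = m)) := by omega
        unfold E10 Etwo
        rw [if_neg hc1, if_neg hc2]
  · intro i hi j
    rw [etwo_rowsum hm1 hm2, e10_colsum hn] at hi
    by_cases hd : (i : ℕ) = 1 ∨ (i : ℕ) = m + 1
    · rcases hd with hi1 | him
      · exfalso
        rw [ite_one (Or.inl hi1), he1 i hi1,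
          if_neg (show ¬((i : ℕ) = 0) by omega)] at hi
        norm_num at hi
      · have hE : E10 n i j = 0 := ite_zero (by omega)
        have he0 : e' i = 0 := hez i (by omega)
        have hcol : (∑ k, E10 n k i) = 0 := by
          rw [e10_colsum hn]; exact ite_zero (by omega)
        rw [hE, he0, hcol]
        norm_num
    · exfalso
      rw [ite_zero hd] at hi
      have h1 : (0:ℝ) ≤ if (i : ℕ) = 0 then 1 else 0 := by split <;> norm_num
      have h2 : (0:ℝ) ≤ e' i := by
        by_cases hc : (i : ℕ) = 1
        · rw [he1 i hc]; norm_num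
        · rw [hez i hc]
      linarith

lemma clear_zero_net {n : ℕ} (e' : Fin n → ℝ) :
    IsClearing 1 1 e' (fun _ _ => (0 : ℝ)) (fun (_ _ : Fin n) => (0 : ℝ)) := by
  refine ⟨fun _ _ => le_refl 0, fun _ _ => le_refl 0, fun _ _ _ => rfl, fun i _ j => by norm_num⟩

def sstarFun (n : ℕ) : Fin n → Finset (Fin n) := fun j =>
  if h : 1 ≤ (j : ℕ) ∧ (j : ℕ) + 2 ≤ n then {(⟨(j : ℕ) + 1, Nat.lt_of_lt_of_le (Nat.lt_succ_self _) h.2⟩ : Fin n)} else ∅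

lemma mem_sstarFun {n : ℕ} {i k : Fin n} :
    i ∈ sstarFun n k ↔ 1 ≤ (k : ℕ) ∧ (k : ℕ) + 2 ≤ n ∧ (i : ℕ) = (k : ℕ) + 1 := by
  unfold sstarFun
  by_cases h : 1 ≤ (k : ℕ) ∧ (k : ℕ) + 2 ≤ n
  · rw [dif_pos h, Finset.mem_singleton]
    constructor
    · intro he; exact ⟨h.1, h.2, by rw [he]⟩
    · rintro ⟨-, -, hv⟩; exact Fin.ext hv
  · rw [dif_neg h]
    simp only [Finset.notMem_empty, false_iff]
    omega

lemma net_to_e10 {n : ℕ} (hn : 3 ≤ n) (s : Fin n → Finset (Fin n))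
    (hkeep : ∀ i k : Fin n, (i : ℕ) = 1 → (k : ℕ) = 0 → i ∉ s k)
    (hrem : ∀ i k : Fin n, (i : ℕ) = (k : ℕ) + 1 → 1 ≤ (k : ℕ) → i ∈ s k) :
    removeEdges (chainL n) s = E10 n := by
  funext i k
  show (if i ∈ s k then 0 else chainL n i k) = E10 n i k
  by_cases hik : (i : ℕ) = (k : ℕ) + 1
  · by_cases hk1 : 1 ≤ (k : ℕ)
    · rw [if_pos (hrem i k hik hk1)]
      exact (ite_zero (show ¬((i : ℕ) = 1 ∧ (k : ℕ) = 0) by omega)).symm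
    · rw [if_neg (hkeep i k (by omega) (by omega))]
      unfold chainL E10
      rw [if_pos hik]
      exact (if_pos (show (i : ℕ) = 1 ∧ (k : ℕ) = 0 by omega)).symm
  · have hE : E10 n i k = 0 := ite_zero (by omega)
    rw [hE]
    by_cases him : i ∈ s k
    · rw [if_pos him]
    · rw [if_neg him]; exact ite_zero hik

lemma net_to_etwo {n : ℕ} (hn : 3 ≤ n) (m : ℕ) (hm : 1 ≤ m) (hm2 : m + 2 ≤ n)
    (s : Fin n → Finset (Fin n))
    (hkeep0 : ∀ i k : Fin n, (i : ℕ) = 1 → (k : ℕ) = 0 → i ∉ s k)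
    (hkeepm : ∀ i k : Fin n, (i : ℕ) = m + 1 → (k : ℕ) = m → i ∉ s k)
    (hrem : ∀ i k : Fin n, (i : ℕ) = (k : ℕ) + 1 → 1 ≤ (k : ℕ) → (k : ℕ) ≠ m → i ∈ s k) :
    removeEdges (chainL n) s = Etwo n m := by
  funext i k
  show (if i ∈ s k then 0 else chainL n i k) = Etwo n m i k
  by_cases hik : (i : ℕ) = (k : ℕ) + 1
  · by_cases hk0 : (k : ℕ) = 0
    · rw [if_neg (hkeep0 i k (by omega) hk0)]
      unfold chainL Etwo
      rw [if_pos hik]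
      exact (if_pos (Or.inl (by omega))).symm
    · by_cases hkm : (k : ℕ) = m
      · rw [if_neg (hkeepm i k (by omega) hkm)]
        unfold chainL Etwo
        rw [if_pos hik]
        exact (if_pos (Or.inr (by omega))).symm
      · rw [if_pos (hrem i k hik (by omega) hkm)]
        exact (ite_zero (show ¬(((i : ℕ) = 1 ∧ (k : ℕ) = 0) ∨
          ((i : ℕ) = m + 1 ∧ (k : ℕ) = m)) by omega)).symm
  · have hE : Etwo n m i k = 0 := ite_zero (by omega)
    rw [hE]
    by_cases him : i ∈ s k
    · rw [if_pos him]
    · rw [if_neg him]; exact ite_zero hik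

lemma net_to_zero {n : ℕ} (s : Fin n → Finset (Fin n))
    (hrem : ∀ i k : Fin n, (i : ℕ) = (k : ℕ) + 1 → i ∈ s k) :
    removeEdges (chainL n) s = fun _ _ => (0 : ℝ) := by
  funext i k
  show (if i ∈ s k then 0 else chainL n i k) = 0
  by_cases hik : (i : ℕ) = (k : ℕ) + 1
  · rw [if_pos (hrem i k hik)]
  · by_cases him : i ∈ s k
    · rw [if_pos him]
    · rw [if_neg him]; exact ite_zero hik

lemma net_chain {n : ℕ} :
    removeEdges (chainL n) (fun _ => (∅ : Finset (Fin n))) = chainL n := by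
  funext i k
  show (if i ∈ (∅ : Finset (Fin n)) then 0 else chainL n i k) = chainL n i k
  rw [if_neg (Finset.notMem_empty i)]

lemma net_sstar {n : ℕ} (hn : 3 ≤ n) :
    removeEdges (chainL n) (sstarFun n) = E10 n := by
  refine net_to_e10 hn _ ?_ ?_
  · intro i k hi hk him
    rw [mem_sstarFun] at him
    omega
  · intro i k hik hk1
    rw [mem_sstarFun]
    exact ⟨hk1, by have := i.isLt; omega, hik⟩

end EoA

/-- The path network on `n ≥ 3` banks (bank `i-1` is vᵢ): no external assets, liabilities
`l_{v_{i+1}, v_i} = 1`, budget `M = 1`, no default costs, with the regulator's injection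
rule.  (i) With no removals the budget goes to vₙ and the liquidity is `n-1`;
(ii) the profile where each vᵢ, `2 ≤ i ≤ n-1`, removes its incoming edge and v₁ keeps its
incoming edge is a pure Nash equilibrium with liquidity 1.  Hence the Effect of Anarchy
of edge-removal games with cash injections is at least `n-1`. -/
theorem injection_game_effect_of_anarchy
    (n : ℕ) (hn : 3 ≤ n)
    (e : Fin n → ℝ) (he : e = fun _ => 0)
    (l : Fin n → Fin n → ℝ)
    (hl : l = fun (i j : Fin n) => if (i : ℕ) = (j : ℕ) + 1 then 1 else 0)
    (M : ℝ) (hM : M = 1)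
    (P₀ Pay : (Fin n → Finset (Fin n)) → Fin n → Fin n → ℝ)
    (μ : (Fin n → Finset (Fin n)) → Fin n → ℝ)
    (b : (Fin n → Finset (Fin n)) → Fin n)
    (hP₀ : ∀ s, IsMaxClearing 1 1 e (removeEdges l s) (P₀ s))
    (hμ : ∀ s, IsThreatIndex e (removeEdges l s) (P₀ s) (μ s))
    (hb : ∀ s, TargetSpec e (removeEdges l s) (P₀ s) (μ s) (b s))
    (hPay : ∀ s, IsMaxClearing 1 1
      (fun i => e i + if i = b s then M else 0) (removeEdges l s) (Pay s))
    (sstar : Fin n → Finset (Fin n))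
    (hsstar : sstar = fun (j : Fin n) =>
      if h : 1 ≤ (j : ℕ) ∧ (j : ℕ) + 2 ≤ n
      then {(⟨(j : ℕ) + 1, by omega⟩ : Fin n)} else ∅) :
    -- (i) with no removals the budget goes to vₙ and the liquidity is n-1
    ((b (fun _ => (∅ : Finset (Fin n))) : ℕ) = n - 1 ∧
      liquidity (Pay (fun _ => (∅ : Finset (Fin n)))) = (n : ℝ) - 1)
    -- (ii) sstar is a pure Nash equilibrium with liquidity 1
    ∧ (∀ (j : Fin n) (R : Finset (Fin n)),
        assets (fun i => e i + if i = b (Function.update sstar j R) then M else 0)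
            (Pay (Function.update sstar j R)) j
          ≤ assets (fun i => e i + if i = b sstar then M else 0) (Pay sstar) j)
    ∧ liquidity (Pay sstar) = 1 := by
  subst he hM
  have hlc : l = EoA.chainL n := hl
  subst hlc
  have hsc : sstar = EoA.sstarFun n := hsstar
  subst hsc
  -- generic facts
  have htri : ∀ (s : Fin n → Finset (Fin n)) (i j : Fin n),
      removeEdges (EoA.chainL n) s i j ≠ 0 → (i : ℕ) = (j : ℕ) + 1 := by
    intro s i j h
    have hval : removeEdges (EoA.chainL n) s i j
        = if i ∈ s j then 0 else EoA.chainL n i j := rfl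
    rw [hval] at h
    by_cases him : i ∈ s j
    · rw [if_pos him] at h; exact absurd rfl h
    · rw [if_neg him] at h; exact EoA.chain_tri i j h
  have hnn : ∀ (s : Fin n → Finset (Fin n)) (i j : Fin n),
      0 ≤ removeEdges (EoA.chainL n) s i j := by
    intro s i j
    have hval : removeEdges (EoA.chainL n) s i j
        = if i ∈ s j then 0 else EoA.chainL n i j := rfl
    rw [hval]
    by_cases him : i ∈ s j
    · rw [if_pos him]
    · rw [if_neg him]; exact EoA.chain_nonneg i j
  have hP0z : ∀ s, P₀ s = fun _ _ => 0 := fun s =>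
    EoA.pay_eq (htri s) (hP₀ s) (EoA.isClearing_zero _ (hnn s))
  have hge : ∀ (c : Fin n) (i : Fin n), (0:ℝ) ≤ 0 + (if i = c then (1:ℝ) else 0) := by
    intro c i; split <;> norm_num
  have hone : ∀ (c i : Fin n), i = c → (0:ℝ) + (if i = c then (1:ℝ) else 0) = 1 := by
    intro c i h; rw [if_pos h]; norm_num
  have hzero : ∀ (c i : Fin n), i ≠ c → (0:ℝ) + (if i = c then (1:ℝ) else 0) = 0 := by
    intro c i h; rw [if_neg h]; norm_num
  -- part (i)
  have hnet0 := EoA.net_chain (n := n)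
  have hb0 : (b (fun _ => (∅ : Finset (Fin n))) : ℕ) = n - 1 := by
    have hbs := hb (fun _ => ∅)
    have hms := hμ (fun _ => ∅)
    rw [hP0z, hnet0] at hbs hms
    exact EoA.chain_b hn _ _ hms hbs
  have hPay0 : Pay (fun _ => ∅) = EoA.chainL n := by
    have hps := hPay (fun _ => ∅)
    rw [hnet0] at hps
    exact EoA.pay_eq EoA.chain_tri hps
      (EoA.clear_chain_full hn _ (fun i => hge _ i)
        (fun i hi => hone _ i (Fin.ext (by omega))))
  -- the sstar profile
  have hnetS := EoA.net_sstar (n := n) hn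
  have hbS : (b (EoA.sstarFun n) : ℕ) = 1 := by
    have hbs := hb (EoA.sstarFun n)
    rw [hP0z, hnetS] at hbs
    exact EoA.e10_b hn _ _ hbs
  have hPayS : Pay (EoA.sstarFun n) = EoA.E10 n := by
    have hps := hPay (EoA.sstarFun n)
    rw [hnetS] at hps
    exact EoA.pay_eq EoA.e10_tri hps
      (EoA.clear_e10_full hn _ (fun i => hge _ i)
        (fun i hi => hone _ i (Fin.ext (by omega))))
  refine ⟨⟨hb0, by rw [hPay0]; exact EoA.liq_chain hn⟩, ?_,
    by rw [hPayS]; exact EoA.liq_e10 hn⟩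
  -- part (ii): Nash equilibrium
  intro j R
  set s' := Function.update (EoA.sstarFun n) j R with hs'
  have hmem_upd_eq : ∀ (i k : Fin n), k = j → (i ∈ s' k ↔ i ∈ R) := by
    intro i k hkj; rw [hs', hkj, Function.update_self]
  have hmem_upd_ne : ∀ (i k : Fin n), k ≠ j → (i ∈ s' k ↔ i ∈ EoA.sstarFun n k) := by
    intro i k hkj; rw [hs', Function.update_of_ne hkj]
  show (0:ℝ) + (if j = b s' then (1:ℝ) else 0) + (∑ k, Pay s' k j)
      ≤ (0:ℝ) + (if j = b (EoA.sstarFun n) then (1:ℝ) else 0)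
        + (∑ k, Pay (EoA.sstarFun n) k j)
  rw [hPayS, EoA.e10_colsum hn j]
  by_cases hj0 : (j : ℕ) = 0
  · by_cases hR1 : (⟨1, by omega⟩ : Fin n) ∈ R
    · -- empty network
      have hnet : removeEdges (EoA.chainL n) s' = fun _ _ => 0 := by
        refine EoA.net_to_zero _ ?_
        intro i k hik
        by_cases hkj : k = j
        · rw [hmem_upd_eq i k hkj]
          have hkv : (k : ℕ) = 0 := by rw [hkj]; exact hj0
          have hi1 : i = (⟨1, by omega⟩ : Fin n) := Fin.ext (show (i : ℕ) = 1 by omega)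
          rw [hi1]; exact hR1
        · rw [hmem_upd_ne i k hkj]
          rw [EoA.mem_sstarFun]
          have hkv : (k : ℕ) ≠ 0 := fun h => hkj (Fin.ext (by omega))
          have := i.isLt
          omega
      have hbv : (b s' : ℕ) = 0 := by
        have hbs := hb s'
        rw [hP0z, hnet] at hbs
        refine hbs.1 ?_
        exact Set.eq_empty_iff_forall_notMem.2 (fun x hx => by
          rw [EoA.mem_def0] at hx; simp at hx)
      have hPay' : Pay s' = fun _ _ => 0 := by
        have hps := hPay s'
        rw [hnet] at hps
        exact EoA.pay_eq EoA.zero_tri hps (EoA.clear_zero_net _)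
      rw [hPay', EoA.aux_sum_zero _ (fun k => rfl)]
      rw [if_pos (show j = b s' from Fin.ext (by omega))]
      rw [if_neg (show j ≠ b (EoA.sstarFun n) from
        fun h => absurd (congrArg Fin.val h) (by omega))]
      rw [if_pos hj0]
      norm_num
    · -- E10 network
      have hnet : removeEdges (EoA.chainL n) s' = EoA.E10 n := by
        refine EoA.net_to_e10 hn _ ?_ ?_
        · intro i k hi1 hk0
          have hkj : k = j := Fin.ext (by omega)
          rw [hmem_upd_eq i k hkj]
          intro him
          have hi : i = (⟨1, by omega⟩ : Fin n) := Fin.ext (show (i : ℕ) = 1 by omega)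
          exact hR1 (hi ▸ him)
        · intro i k hik hk1
          have hkj : k ≠ j := fun h => absurd (congrArg Fin.val h) (by omega)
          rw [hmem_upd_ne i k hkj, EoA.mem_sstarFun]
          have := i.isLt
          omega
      have hbv : (b s' : ℕ) = 1 := by
        have hbs := hb s'
        rw [hP0z, hnet] at hbs
        exact EoA.e10_b hn _ _ hbs
      have hPay' : Pay s' = EoA.E10 n := by
        have hps := hPay s'
        rw [hnet] at hps
        exact EoA.pay_eq EoA.e10_tri hps
          (EoA.clear_e10_full hn _ (fun i => hge _ i)
            (fun i hi => hone _ i (Fin.ext (by omega))))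
      rw [hPay', EoA.e10_colsum hn j]
      rw [if_neg (show j ≠ b s' from fun h => absurd (congrArg Fin.val h) (by omega))]
      rw [if_neg (show j ≠ b (EoA.sstarFun n) from
        fun h => absurd (congrArg Fin.val h) (by omega))]
  · by_cases hjn : (j : ℕ) = n - 1
    · -- E10 network: bank n-1 has no incoming edge
      have hnet : removeEdges (EoA.chainL n) s' = EoA.E10 n := by
        refine EoA.net_to_e10 hn _ ?_ ?_
        · intro i k hi1 hk0
          have hkj : k ≠ j := fun h => absurd (congrArg Fin.val h) (by omega)
          rw [hmem_upd_ne i k hkj, EoA.mem_sstarFun]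
          omega
        · intro i k hik hk1
          have := i.isLt
          have hkj : k ≠ j := fun h => absurd (congrArg Fin.val h) (by omega)
          rw [hmem_upd_ne i k hkj, EoA.mem_sstarFun]
          omega
      have hbv : (b s' : ℕ) = 1 := by
        have hbs := hb s'
        rw [hP0z, hnet] at hbs
        exact EoA.e10_b hn _ _ hbs
      have hPay' : Pay s' = EoA.E10 n := by
        have hps := hPay s'
        rw [hnet] at hps
        exact EoA.pay_eq EoA.e10_tri hps
          (EoA.clear_e10_full hn _ (fun i => hge _ i)
            (fun i hi => hone _ i (Fin.ext (by omega))))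
      rw [hPay', EoA.e10_colsum hn j]
      rw [if_neg (show j ≠ b s' from fun h => absurd (congrArg Fin.val h) (by omega))]
      rw [if_neg (show j ≠ b (EoA.sstarFun n) from
        fun h => absurd (congrArg Fin.val h) (by omega))]
    · have hj1 : 1 ≤ (j : ℕ) := by omega
      have hj2 : (j : ℕ) + 2 ≤ n := by have := j.isLt; omega
      by_cases hRj : (⟨(j : ℕ) + 1, by omega⟩ : Fin n) ∈ R
      · -- E10 network
        have hnet : removeEdges (EoA.chainL n) s' = EoA.E10 n := by
          refine EoA.net_to_e10 hn _ ?_ ?_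
          · intro i k hi1 hk0
            have hkj : k ≠ j := fun h => absurd (congrArg Fin.val h) (by omega)
            rw [hmem_upd_ne i k hkj, EoA.mem_sstarFun]
            omega
          · intro i k hik hk1
            by_cases hkj : k = j
            · rw [hmem_upd_eq i k hkj]
              have hi : i = (⟨(j : ℕ) + 1, by omega⟩ : Fin n) :=
                Fin.ext (show (i : ℕ) = (j : ℕ) + 1 by omega)
              exact hi ▸ hRj
            · rw [hmem_upd_ne i k hkj, EoA.mem_sstarFun]
              have := i.isLt
              omega
        have hbv : (b s' : ℕ) = 1 := by
          have hbs := hb s'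
          rw [hP0z, hnet] at hbs
          exact EoA.e10_b hn _ _ hbs
        have hPay' : Pay s' = EoA.E10 n := by
          have hps := hPay s'
          rw [hnet] at hps
          exact EoA.pay_eq EoA.e10_tri hps
            (EoA.clear_e10_full hn _ (fun i => hge _ i)
              (fun i hi => hone _ i (Fin.ext (by omega))))
        rw [hPay', EoA.e10_colsum hn j]
        by_cases hjm : (j : ℕ) = 1
        · rw [if_pos (show j = b s' from Fin.ext (by omega))]
          rw [if_pos (show j = b (EoA.sstarFun n) from Fin.ext (by omega))]
        · rw [if_neg (show j ≠ b s' from fun h => absurd (congrArg Fin.val h) (by omega))]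
          rw [if_neg (show j ≠ b (EoA.sstarFun n) from
            fun h => absurd (congrArg Fin.val h) (by omega))]
      · -- Etwo network
        have hnet : removeEdges (EoA.chainL n) s' = EoA.Etwo n (j : ℕ) := by
          refine EoA.net_to_etwo hn _ hj1 hj2 _ ?_ ?_ ?_
          · intro i k hi1 hk0
            have hkj : k ≠ j := fun h => absurd (congrArg Fin.val h) (by omega)
            rw [hmem_upd_ne i k hkj, EoA.mem_sstarFun]
            omega
          · intro i k him hkm
            have hkj : k = j := Fin.ext (by omega)
            rw [hmem_upd_eq i k hkj]
            intro hin
            have hi : i = (⟨(j : ℕ) + 1, by omega⟩ : Fin n) :=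
              Fin.ext (show (i : ℕ) = (j : ℕ) + 1 by omega)
            exact hRj (hi ▸ hin)
          · intro i k hik hk1 hkm
            have hkj : k ≠ j := fun h => absurd (congrArg Fin.val h) (by omega)
            rw [hmem_upd_ne i k hkj, EoA.mem_sstarFun]
            have := i.isLt
            omega
        have hms := hμ s'
        have hbs := hb s'
        rw [hP0z, hnet] at hms hbs
        have hbv : (b s' : ℕ) = if (j : ℕ) = 1 then 2 else 1 :=
          EoA.etwo_b hn hj1 hj2 _ _ hms hbs
        by_cases hjm : (j : ℕ) = 1
        · rw [if_pos hjm] at hbv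
          have hnet1 : removeEdges (EoA.chainL n) s' = EoA.Etwo n 1 := by rw [hnet, hjm]
          have hPay' : Pay s' = EoA.Etwo n 1 := by
            have hps := hPay s'
            rw [hnet1] at hps
            exact EoA.pay_eq EoA.etwo_tri hps
              (EoA.clear_etwo1_full hn _ (fun i => hge _ i)
                (fun i hi => hone _ i (Fin.ext (by omega))))
          rw [hPay', EoA.etwo_colsum (le_refl 1) (by omega) j]
          rw [if_neg (show j ≠ b s' from fun h => absurd (congrArg Fin.val h) (by omega))]
          rw [if_pos (show (j : ℕ) = 0 ∨ (j : ℕ) = 1 from Or.inr hjm)]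
          rw [if_pos (show j = b (EoA.sstarFun n) from Fin.ext (by omega))]
          rw [if_neg (show ¬((j : ℕ) = 0) by omega)]
          norm_num
        · rw [if_neg hjm] at hbv
          have hPay' : Pay s' = EoA.E10 n := by
            have hps := hPay s'
            rw [hnet] at hps
            exact EoA.pay_eq EoA.etwo_tri hps
              (EoA.clear_etwo_e10 hn (by omega) hj2 _
                (fun i hi => hone _ i (Fin.ext (by omega)))
                (fun i hi => hzero _ i
                  (fun h => hi ((congrArg Fin.val h).trans hbv))))
          rw [hPay', EoA.e10_colsum hn j]
          rw [if_neg (show j ≠ b s' from fun h => absurd (congrArg Fin.val h) (by omega))]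
          rw [if_neg (show j ≠ b (EoA.sstarFun n) from
            fun h => absurd (congrArg Fin.val h) (by omega))]
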